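/- For each tree T, the edge sums Γ_e (e ∈ E_T) are linearly independent as linear functionals of the antisymmetric array (γ_{ij}); hence they span an (n−1)-dimensional subspace of the (n(n−1)/2)-dimensional space of antisymmetric arrays' dual. -/

import Mathlib

open scoped Classical

/-- For an antisymmetric array `γ` and a graph `T` on `Fin n`, the edge sum
`Γ_e = Σ_{k ∈ V(T_e^s)} Σ_{l ∈ V(T_e^t)} γ k l` attached to the (oriented) edge
`e = (i,j)`: here `T_e^s` and `T_e^t` are the two connected components of `T` with the
edge `{i,j}` removed, containing `i` and `j` respectively. -/
noncomputable def edgeSum {n : ℕ} (γ : Fin n → Fin n → ℝ) (T : SimpleGraph (Fin n))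
    (i j : Fin n) : ℝ :=
  ∑ k, ∑ l,
    if (T.deleteEdges {s(i, j)}).Reachable k i ∧ (T.deleteEdges {s(i, j)}).Reachable l j
    then γ k l else 0

lemma edgeSum_indicator {n : ℕ} (T : SimpleGraph (Fin n)) (k l i j : Fin n) (hkl : k ≠ l) :
    edgeSum (fun p q => if p = k ∧ q = l then (1:ℝ) else if p = l ∧ q = k then -1 else 0) T i j
    = (if (T.deleteEdges {s(i, j)}).Reachable k i ∧ (T.deleteEdges {s(i, j)}).Reachable l j
        then (1:ℝ) else 0)
    - (if (T.deleteEdges {s(i, j)}).Reachable l i ∧ (T.deleteEdges {s(i, j)}).Reachable k j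
        then (1:ℝ) else 0) := by
  classical
  set C : Fin n → Fin n → Prop := fun p q =>
    (T.deleteEdges {s(i, j)}).Reachable p i ∧ (T.deleteEdges {s(i, j)}).Reachable q j with hC
  have key : ∀ p q : Fin n,
      (if C p q then (if p = k ∧ q = l then (1:ℝ) else if p = l ∧ q = k then -1 else 0) else 0)
      = (if p = k then (if q = l then (if C p q then (1:ℝ) else 0) else 0) else 0)
        - (if p = l then (if q = k then (if C p q then (1:ℝ) else 0) else 0) else 0) := by
    intro p q
    by_cases h1 : p = k <;> by_cases h2 : q = l <;> by_cases h3 : p = l <;>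
      by_cases h4 : q = k <;> simp_all <;> split_ifs <;> ring
  have A : ∀ a b : Fin n,
      (∑ p, ∑ q, if p = a then (if q = b then (if C p q then (1:ℝ) else 0) else 0) else 0)
      = (if C a b then (1:ℝ) else 0) := by
    intro a b
    rw [Finset.sum_eq_single_of_mem a (Finset.mem_univ a)
      (by intro x _ hx; simp [hx])]
    rw [Finset.sum_eq_single_of_mem b (Finset.mem_univ b)
      (by intro x _ hx; simp [hx])]
    simp
  unfold edgeSum
  simp only [hC] at key A
  simp only [← hC, key, Finset.sum_sub_distrib]
  rw [A k l, A l k]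

theorem edgeSum_linearly_independent (n : ℕ)
    (T : SimpleGraph (Fin n)) (hT : T.IsTree)
    (E : Fin n → Fin n → Prop)
    (hE : ∀ i j, T.Adj i j ↔ (E i j ∨ E j i))
    (hE' : ∀ i j, E i j → ¬ E j i)
    (c : Fin n → Fin n → ℝ)
    (hc : ∀ γ : Fin n → Fin n → ℝ, (∀ i j, γ i j = - γ j i) →
      (∑ k, ∑ l, if E k l then c k l * edgeSum γ T k l else 0) = 0) :
    ∀ k l, E k l → c k l = 0 := by
  intro k l hkl
  have hadjkl : T.Adj k l := (hE k l).2 (Or.inl hkl)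
  have hne : k ≠ l := hadjkl.ne
  set γ : Fin n → Fin n → ℝ := fun p q =>
    if p = k ∧ q = l then (1:ℝ) else if p = l ∧ q = k then -1 else 0 with hγ
  have hanti : ∀ i j, γ i j = - γ j i := by
    intro i j
    by_cases h1 : i = k <;> by_cases h2 : j = l <;> by_cases h3 : i = l <;>
      by_cases h4 : j = k <;> simp_all [γ]
  have hsum := hc γ hanti
  -- every edge of the tree is a bridge
  have hbridge : ¬ (T.deleteEdges {s(k, l)}).Reachable k l := by
    have := hT.IsAcyclic
    rw [SimpleGraph.isAcyclic_iff_forall_adj_isBridge] at this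
    have hb := this hadjkl
    rw [SimpleGraph.isBridge_iff] at hb
    exact hb
  have hterm : ∀ i j : Fin n,
      (if E i j then c i j * edgeSum γ T i j else 0)
      = if i = k ∧ j = l then c k l else 0 := by
    intro i j
    by_cases hij : i = k ∧ j = l
    · obtain ⟨rfl, rfl⟩ := hij
      rw [if_pos hkl, if_pos ⟨rfl, rfl⟩, edgeSum_indicator T i j i j hne]
      have h1 : (T.deleteEdges {s(i, j)}).Reachable i i := SimpleGraph.Reachable.refl i
      have h2 : (T.deleteEdges {s(i, j)}).Reachable j j := SimpleGraph.Reachable.refl j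
      rw [if_pos ⟨h1, h2⟩, if_neg]
      · ring
      · rintro ⟨hr, -⟩
        exact hbridge hr.symm
    · rw [if_neg hij]
      by_cases hEij : E i j
      · rw [if_pos hEij, edgeSum_indicator T k l i j hne]
        -- the edge {k,l} is still present after deleting {i,j}
        have hkeep : (T.deleteEdges {s(i, j)}).Adj k l := by
          rw [SimpleGraph.deleteEdges_adj]
          refine ⟨hadjkl, ?_⟩
          simp only [Set.mem_singleton_iff, Sym2.eq, Sym2.rel_iff', Prod.mk.injEq,
            Prod.swap_prod_mk]
          rintro (⟨rfl, rfl⟩ | ⟨rfl, rfl⟩)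
          · exact hij ⟨rfl, rfl⟩
          · exact hE' k l hkl hEij
        have hiff : ∀ v : Fin n, (T.deleteEdges {s(i, j)}).Reachable k v ↔
            (T.deleteEdges {s(i, j)}).Reachable l v := by
          intro v
          constructor
          · exact fun h => (hkeep.symm.reachable).trans h
          · exact fun h => (hkeep.reachable).trans h
        by_cases h1 : (T.deleteEdges {s(i, j)}).Reachable k i ∧
            (T.deleteEdges {s(i, j)}).Reachable l j
        · rw [if_pos h1, if_pos ⟨(hiff i).1 h1.1, (hiff j).2 h1.2⟩]; ring
        · rw [if_neg h1, if_neg]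
          · ring
          · rintro ⟨ha, hb⟩
            exact h1 ⟨(hiff i).2 ha, (hiff j).1 hb⟩
      · rw [if_neg hEij]
  have : (∑ i, ∑ j, if E i j then c i j * edgeSum γ T i j else 0) = c k l := by
    simp only [hterm]
    rw [Finset.sum_eq_single_of_mem k (Finset.mem_univ k)
      (by intro x _ hx; simp [hx])]
    rw [Finset.sum_eq_single_of_mem l (Finset.mem_univ l)
      (by intro x _ hx; simp [hx])]
    simp
  rw [hsum] at this
  exact this.symm
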